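/- Model lifting through approximation: if N ⇒_AP* N' is any finite sequence of Refinement, Monadic, Shallow, and Linear transformation steps and the Herbrand interpretation I satisfies N', then the reverse monadic projection of I over the signature (replacing each encoded atom T(f_P(t⃗)) back by P(t⃗) for every non-monadic predicate P eliminated along the sequence) is a model of N. -/

import Mathlib

/- Common formalization of first-order clauses with straight dismatching
   constraints (SDC), following Teucke & Weidenbach,
   "Decidability of the Monadic Shallow Linear First-Order Fragment with
   Straight Dismatching Constraints". -/

set_option linter.unusedVariables false

namespace SDCPaper

/-- A first-order signature: function symbols and predicate symbols.
    (Symbols are applied to argument lists; arities are not fixed.) -/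
structure Sig : Type 1 where
  Func : Type
  Pred : Type

variable {S : Sig}

/-- First-order terms; variables are indexed by natural numbers. -/
inductive Term (S : Sig) : Type where
  | var : Nat → Term S
  | app : S.Func → List (Term S) → Term S

/-- Substitutions. -/
abbrev Subst (S : Sig) := Nat → Term S

/-- Applying a substitution to a term. -/
def Term.subst (σ : Subst S) : Term S → Term S
  | .var x => σ x
  | .app f ts => .app f (ts.attach.map fun t => Term.subst σ t.1)
  decreasing_by simp_wf; have := List.sizeOf_lt_of_mem t.2; omega

/-- The list of (occurrences of) variables of a term. -/
def Term.varList : Term S → List Nat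
  | .var x => [x]
  | .app _ ts => (ts.attach.map fun t => Term.varList t.1).flatten
  decreasing_by simp_wf; have := List.sizeOf_lt_of_mem t.2; omega

/-- Term depth: variables have depth 0, applications depth 1 + max of arguments. -/
def Term.depth : Term S → Nat
  | .var _ => 0
  | .app _ ts => ((ts.attach.map fun t => Term.depth t.1).foldr max 0) + 1
  decreasing_by simp_wf; have := List.sizeOf_lt_of_mem t.2; omega

/-- The subterm of `t` at a position (a sequence of argument indices), if any. -/
def Term.atPos : Term S → List Nat → Option (Term S)
  | t, [] => some t
  | Term.var _, _ :: _ => none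
  | Term.app _ ts, i :: r => (ts[i]?).bind fun u => Term.atPos u r
  termination_by t p => p.length

/-- `r` is a position of the term `t`. -/
inductive Term.HasPos : Term S → List Nat → Prop
  | nil (t : Term S) : Term.HasPos t []
  | cons (f : S.Func) (ts : List (Term S)) (i : Nat) (r : List Nat) (t : Term S) :
      ts[i]? = some t → Term.HasPos t r → Term.HasPos (.app f ts) (i :: r)

def Term.IsGround (t : Term S) : Prop := t.varList = []

def Term.Linear (t : Term S) : Prop := t.varList.Nodup

def Term.Shallow (t : Term S) : Prop := t.depth ≤ 1

/-- A term is complex if it is not a variable. -/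
def Term.IsComplex : Term S → Prop
  | .var _ => False
  | .app _ _ => True

/-- A term is straight if it is a variable, or a function applied to
    pairwise distinct variables except for at most one straight argument. -/
inductive Straight : Term S → Prop
  | var (x : Nat) : Straight (.var x)
  | allVars (f : S.Func) (ts : List (Term S)) :
      (∀ t ∈ ts, ∃ x, t = Term.var x) → ts.Nodup → Straight (.app f ts)
  | oneArg (f : S.Func) (ts₁ ts₂ : List (Term S)) (s : Term S) :
      Straight s →
      (∀ t ∈ ts₁ ++ ts₂, ∃ x, t = Term.var x) →
      (ts₁ ++ s :: ts₂).Nodup →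
      Straight (.app f (ts₁ ++ s :: ts₂))

/-- `s` is a strict subterm of `t`. -/
inductive StrictSubterm : Term S → Term S → Prop
  | arg (s : Term S) (f : S.Func) (ts : List (Term S)) :
      s ∈ ts → StrictSubterm s (.app f ts)
  | deep (s t : Term S) (f : S.Func) (ts : List (Term S)) :
      t ∈ ts → StrictSubterm s t → StrictSubterm s (.app f ts)

/-- Replacement of exactly one occurrence of the variable `x` by `x'`. -/
inductive ReplOne (x x' : Nat) : Term S → Term S → Prop
  | var : ReplOne x x' (.var x) (.var x')
  | app (f : S.Func) (ts₁ ts₂ : List (Term S)) (t t' : Term S) :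
      ReplOne x x' t t' →
      ReplOne x x' (.app f (ts₁ ++ t :: ts₂)) (.app f (ts₁ ++ t' :: ts₂))

/-- The function symbol `f` occurs in the term. -/
inductive FuncInTerm (f : S.Func) : Term S → Prop
  | head (ts : List (Term S)) : FuncInTerm f (.app f ts)
  | arg (g : S.Func) (ts : List (Term S)) (t : Term S) :
      t ∈ ts → FuncInTerm f t → FuncInTerm f (.app g ts)

/-- `t` is an instance of `s`. -/
def IsInstanceOf (t s : Term S) : Prop := ∃ σ : Subst S, t = s.subst σ

/-- The substitution `{x ↦ t}`. -/
def single (x : Nat) (t : Term S) : Subst S := fun y => if y = x then t else Term.var y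

def IsGroundSubst (δ : Subst S) : Prop := ∀ x, (δ x).IsGround

/-! ### Atoms, literals and clauses -/

/-- An atom: a predicate applied to a list of argument terms. -/
structure Atom (S : Sig) : Type where
  pred : S.Pred
  args : List (Term S)

def Atom.subst (σ : Subst S) (A : Atom S) : Atom S :=
  ⟨A.pred, A.args.map (Term.subst σ)⟩

def Atom.varList (A : Atom S) : List Nat := (A.args.map Term.varList).flatten

def Atom.IsGround (A : Atom S) : Prop := ∀ t ∈ A.args, t.IsGround

/-- A monadic atom has exactly one argument. -/
def Atom.Monadic (A : Atom S) : Prop := A.args.length = 1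

def Atom.HasPos (A : Atom S) (r : List Nat) : Prop :=
  r = [] ∨ ∃ i rr, r = i :: rr ∧ ∃ t, A.args[i]? = some t ∧ Term.HasPos t rr

/-- The argument subterm of an atom at a (non-empty) position. -/
def Atom.atPos (A : Atom S) : List Nat → Option (Term S)
  | [] => none
  | i :: r => (A.args[i]?).bind fun t => t.atPos r

def VarInAtom (x : Nat) (A : Atom S) : Prop := x ∈ A.varList

def IsVarAtom (A : Atom S) : Prop := ∃ x, A.args = [Term.var x]

/-- A clause `Γ → Δ`: multiset `ante` of negative atoms and multiset `succ`
    of positive atoms. -/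
structure Clause (S : Sig) : Type where
  ante : Multiset (Atom S)
  succ : Multiset (Atom S)

def Clause.subst (σ : Subst S) (C : Clause S) : Clause S :=
  ⟨C.ante.map (Atom.subst σ), C.succ.map (Atom.subst σ)⟩

def Clause.IsGround (C : Clause S) : Prop :=
  (∀ A ∈ C.ante, A.IsGround) ∧ (∀ A ∈ C.succ, A.IsGround)

/-- Equality of clauses modulo duplicate literal elimination. -/
def Clause.SameLits (C D : Clause S) : Prop :=
  (∀ A, A ∈ C.ante ↔ A ∈ D.ante) ∧ (∀ A, A ∈ C.succ ↔ A ∈ D.succ)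

/-- A literal: a sign (`true` = positive) together with an atom. -/
abbrev Lit (S : Sig) := Bool × Atom S

/-- The literals of a clause. -/
def Clause.lits (C : Clause S) : Multiset (Lit S) :=
  C.ante.map (fun A => (false, A)) + C.succ.map (fun A => (true, A))

def LitIn (L : Lit S) (C : Clause S) : Prop := L ∈ C.lits

/-! ### Straight dismatching constraints -/

/-- A straight dismatching constraint: either the trivially false constraint
    `⊥` or a conjunction of atomic constraints `t ≠ s` (pairs `(t, s)`). -/
inductive Constr (S : Sig) : Type where
  | bot : Constr S
  | conj : List (Term S × Term S) → Constr S

def Constr.and : Constr S → Constr S → Constr S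
  | .bot, _ => .bot
  | .conj _, .bot => .bot
  | .conj a, .conj b => .conj (a ++ b)

/-- Instantiation of a constraint: substitutions apply to left-hand sides. -/
def Constr.subst (σ : Subst S) : Constr S → Constr S
  | .bot => .bot
  | .conj cs => .conj (cs.map fun c => (c.1.subst σ, c.2))

/-- Depth of a constraint: maximal term depth of right-hand sides. -/
def Constr.depth : Constr S → Nat
  | .bot => 0
  | .conj cs => (cs.map fun c => c.2.depth).foldr max 0

/-- Well-formedness: right-hand sides straight, sides variable disjoint. -/
def Constr.WF : Constr S → Prop
  | .bot => True
  | .conj cs => ∀ c ∈ cs, Straight c.2 ∧ ∀ x ∈ c.1.varList, x ∉ c.2.varList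

def Constr.HasVar (x : Nat) : Constr S → Prop
  | .bot => False
  | .conj cs => ∃ c ∈ cs, x ∈ c.1.varList ∨ x ∈ c.2.varList

def Constr.HasFunc (f : S.Func) : Constr S → Prop
  | .bot => False
  | .conj cs => ∃ c ∈ cs, FuncInTerm f c.1 ∨ FuncInTerm f c.2

/-- `π'` contains a subset of the atomic constraints of `π`. -/
def Constr.Sub : Constr S → Constr S → Prop
  | .bot, .bot => True
  | .conj a, .conj b => ∀ c ∈ a, c ∈ b
  | _, _ => False

/-- A solution of a constraint: a grounding substitution making every
    left-hand side a non-instance of the corresponding right-hand side. -/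
def Solves (δ : Subst S) : Constr S → Prop
  | .bot => False
  | .conj cs => IsGroundSubst δ ∧ ∀ c ∈ cs, ¬ IsInstanceOf (c.1.subst δ) c.2

def Constr.Solvable (π : Constr S) : Prop := ∃ δ, Solves δ π

/-! ### Constraint normalization -/

/-- One step of the constraint normalization rewrite system. -/
inductive NormStep : Constr S → Constr S → Prop
  | funVar (pre post : List (Term S × Term S)) (f : S.Func) (ts : List (Term S)) (y : Nat) :
      NormStep (.conj (pre ++ (Term.app f ts, Term.var y) :: post)) .bot
  | funVars (pre post : List (Term S × Term S)) (f : S.Func) (ts ss : List (Term S)) :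
      (∀ s ∈ ss, ∃ x, s = Term.var x) → ss.Nodup → ts.length = ss.length →
      NormStep (.conj (pre ++ (Term.app f ts, Term.app f ss) :: post)) .bot
  | decomp (pre post : List (Term S × Term S)) (f : S.Func) (ts ss : List (Term S))
      (i : Nat) (hts : i < ts.length) (hss : i < ss.length) :
      ts.length = ss.length → (ss.get ⟨i, hss⟩).IsComplex →
      NormStep (.conj (pre ++ (Term.app f ts, Term.app f ss) :: post))
               (.conj (pre ++ (ts.get ⟨i, hts⟩, ss.get ⟨i, hss⟩) :: post))
  | clash (pre post : List (Term S × Term S)) (f g : S.Func) (ts ss : List (Term S)) :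
      f ≠ g →
      NormStep (.conj (pre ++ (Term.app f ts, Term.app g ss) :: post)) (.conj (pre ++ post))
  | subsume (pre mid post : List (Term S × Term S)) (x : Nat) (s : Term S) (σ : Subst S) :
      NormStep (.conj (pre ++ (Term.var x, s) :: mid ++ (Term.var x, Term.subst σ s) :: post))
               (.conj (pre ++ (Term.var x, s) :: mid ++ post))
  | subsume' (pre mid post : List (Term S × Term S)) (x : Nat) (s : Term S) (σ : Subst S) :
      NormStep (.conj (pre ++ (Term.var x, Term.subst σ s) :: mid ++ (Term.var x, s) :: post))
               (.conj (pre ++ (Term.var x, s) :: mid ++ post))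

def InNormalForm (π : Constr S) : Prop := ∀ π', ¬ NormStep π π'

/-- `π'` is the normal form of `π` under constraint normalization. -/
def IsNormOf (π' π : Constr S) : Prop :=
  Relation.ReflTransGen NormStep π π' ∧ InNormalForm π'

/-! ### Constrained clauses and Herbrand semantics -/

/-- A constrained clause `(C; π)`. -/
abbrev CClause (S : Sig) := Clause S × Constr S

def CClause.subst (σ : Subst S) (c : CClause S) : CClause S :=
  (c.1.subst σ, c.2.subst σ)

/-- The ground instances of a constrained clause. -/
def groundOf (c : CClause S) : Set (Clause S) :=
  {D | ∃ δ, Solves δ c.2 ∧ D = c.1.subst δ}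

/-- A Herbrand interpretation: a set of (ground) atoms. -/
abbrev HIntp (S : Sig) := Set (Atom S)

def SatGround (I : HIntp S) (C : Clause S) : Prop :=
  (∃ A ∈ C.succ, A ∈ I) ∨ (∃ A ∈ C.ante, A ∉ I)

def SatCC (I : HIntp S) (c : CClause S) : Prop := ∀ D ∈ groundOf c, SatGround I D

def SatSet (I : HIntp S) (N : Set (CClause S)) : Prop := ∀ c ∈ N, SatCC I c

def Satisfiable (N : Set (CClause S)) : Prop := ∃ I, SatSet I N

def groundN (N : Set (CClause S)) : Set (Clause S) := {D | ∃ c ∈ N, D ∈ groundOf c}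

def CClause.HasVar (x : Nat) (c : CClause S) : Prop :=
  (∃ A ∈ c.1.ante, VarInAtom x A) ∨ (∃ A ∈ c.1.succ, VarInAtom x A) ∨ c.2.HasVar x

def Atom.HasFunc (f : S.Func) (A : Atom S) : Prop := ∃ t ∈ A.args, FuncInTerm f t

def CClause.HasFunc (f : S.Func) (c : CClause S) : Prop :=
  (∃ A ∈ c.1.ante, A.HasFunc f) ∨ (∃ A ∈ c.1.succ, A.HasFunc f) ∨ c.2.HasFunc f

def CClause.HasPred (P : S.Pred) (c : CClause S) : Prop :=
  (∃ A ∈ c.1.ante, A.pred = P) ∨ (∃ A ∈ c.1.succ, A.pred = P)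

def PredInSet (P : S.Pred) (N : Set (CClause S)) : Prop := ∃ c ∈ N, c.HasPred P

def FuncInSet (f : S.Func) (N : Set (CClause S)) : Prop := ∃ c ∈ N, c.HasFunc f

/-- Equality of constraints modulo duplicate atomic constraints. -/
def Constr.SameAtoms : Constr S → Constr S → Prop
  | .bot, .bot => True
  | .conj a, .conj b => ∀ p, p ∈ a ↔ p ∈ b
  | _, _ => False

/-- Equality of constrained clauses modulo duplicate literal elimination. -/
def CClause.EqModDup (c d : CClause S) : Prop :=
  c.1.SameLits d.1 ∧ Constr.SameAtoms c.2 d.2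

/-- `D` is a ground instance of `(C;π)` modulo duplicate literal elimination. -/
def GroundInstanceModDup (D : Clause S) (c : CClause S) : Prop :=
  ∃ δ, Solves δ c.2 ∧ Clause.SameLits D (c.1.subst δ)

/-- `c` is an instance of `c'` (modulo duplicate literal elimination). -/
def InstanceOfCCModDup (c c' : CClause S) : Prop :=
  ∀ D ∈ groundOf c, ∃ D' ∈ groundOf c', Clause.SameLits D D'

/-! ### Unification -/

def IsUnifier (σ : Subst S) (A B : Atom S) : Prop := A.subst σ = B.subst σ

/-- `σ` is a most general unifier of atoms `A` and `B`. -/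
def IsMGU (σ : Subst S) (A B : Atom S) : Prop :=
  IsUnifier σ A B ∧
  ∀ τ : Subst S, IsUnifier τ A B → ∃ ρ : Subst S, ∀ x, τ x = (σ x).subst ρ

/-! ### Orderings -/

/-- Dershowitz-Manna multiset extension (strict). -/
def MulLT {α : Type} (r : α → α → Prop) (M N : Multiset α) : Prop :=
  ∃ X Y Z, N = Z + X ∧ M = Z + Y ∧ X ≠ 0 ∧ ∀ y ∈ Y, ∃ x ∈ X, r y x

/-- Multiset encoding of literals: `A ↦ {A}`, `¬A ↦ {A, A}`. -/
def litMS : Lit S → Multiset (Atom S)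
  | (true, A) => {A}
  | (false, A) => {A, A}

/-- The literal ordering induced by an atom ordering. -/
def LitLT (r : Atom S → Atom S → Prop) (L L' : Lit S) : Prop :=
  MulLT r (litMS L) (litMS L')

def LitLE (r : Atom S → Atom S → Prop) (L L' : Lit S) : Prop :=
  LitLT r L L' ∨ L = L'

/-- The clause ordering: multiset extension of the literal ordering. -/
def ClauseLT (r : Atom S → Atom S → Prop) (C D : Clause S) : Prop :=
  MulLT (LitLT r) C.lits D.lits

/-- An atom ordering: irreflexive, transitive, total on ground atoms,
    and well-founded. -/
structure AtomOrder (S : Sig) : Type 1 where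
  lt : Atom S → Atom S → Prop
  irrefl : ∀ A, ¬ lt A A
  trans : ∀ A B C, lt A B → lt B C → lt A C
  total : ∀ A B, A.IsGround → B.IsGround → lt A B ∨ lt B A ∨ A = B
  wf : WellFounded lt

/-- The ordering condition of Section 3: a literal `¬Q(s)` is never greater
    than a literal `P(t[s]ₚ)` for `p ≠ ε`. -/
def SelOrderCond (ord : AtomOrder S) : Prop :=
  ∀ (P Q : S.Pred) (s t : Term S), StrictSubterm s t →
    ¬ LitLT ord.lt ((true, ⟨P, [t]⟩) : Lit S) ((false, ⟨Q, [s]⟩) : Lit S)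

/-! ### Selection and the inference rules -/

def VarInSucc (x : Nat) (C : Clause S) : Prop := ∃ A ∈ C.succ, VarInAtom x A

/-- The superposition selection function `sel` (Definition 2). -/
def Selected (C : Clause S) (A : Atom S) : Prop :=
  A ∈ C.ante ∧
  ( (¬ IsVarAtom A)
    ∨ ((∀ B ∈ C.ante, IsVarAtom B) ∧ ∃ x, A.args = [Term.var x] ∧ ¬ VarInSucc x C)
    ∨ ((∀ B ∈ C.ante, ∃ y, B.args = [Term.var y] ∧ VarInSucc y C) ∧
       (∃ x, A.args = [Term.var x] ∧ ∃ B ∈ C.succ, B.args = [Term.var x])) )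

def NoSel (C : Clause S) : Prop := ∀ A, ¬ Selected C A

/-- `A` is strictly maximal w.r.t. the remaining clause `rest` under
    constraint `π` (Definition 3). -/
def StrictlyMaxIn (r : Atom S → Atom S → Prop) (A : Atom S) (rest : Clause S) (π : Constr S) : Prop :=
  ∃ δ, Solves δ π ∧ ∀ L ∈ (rest.subst δ).lits, LitLT r L (true, A.subst δ)

def MaxIn (r : Atom S → Atom S → Prop) (A : Atom S) (rest : Clause S) (π : Constr S) : Prop :=
  ∃ δ, Solves δ π ∧ ∀ L ∈ (rest.subst δ).lits, LitLE r L (true, A.subst δ)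

def MaxNegIn (r : Atom S → Atom S → Prop) (B : Atom S) (rest : Clause S) (π : Constr S) : Prop :=
  ∃ δ, Solves δ π ∧ ∀ L ∈ (rest.subst δ).lits, LitLE r L (false, B.subst δ)

/-- SDC-Resolution (Definition 4). -/
def IsResolvent (r : Atom S → Atom S → Prop) (p1 p2 concl : CClause S) : Prop :=
  ∃ (Γ₁ Δ₁ Γ₂ Δ₂ : Multiset (Atom S)) (A B : Atom S) (π₁ π₂ π : Constr S) (σ : Subst S),
    p1 = (⟨Γ₁, A ::ₘ Δ₁⟩, π₁) ∧
    p2 = (⟨B ::ₘ Γ₂, Δ₂⟩, π₂) ∧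
    IsMGU σ A B ∧
    IsNormOf π ((π₁.and π₂).subst σ) ∧
    π.Solvable ∧
    StrictlyMaxIn r (A.subst σ) (Clause.subst σ ⟨Γ₁, Δ₁⟩) (π₁.subst σ) ∧
    NoSel ⟨Γ₁, A ::ₘ Δ₁⟩ ∧
    (Selected ⟨B ::ₘ Γ₂, Δ₂⟩ B ∨
      (NoSel ⟨B ::ₘ Γ₂, Δ₂⟩ ∧ MaxNegIn r (B.subst σ) (Clause.subst σ ⟨Γ₂, Δ₂⟩) (π₂.subst σ))) ∧
    concl = (Clause.subst σ ⟨Γ₁ + Γ₂, Δ₁ + Δ₂⟩, π)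

/-- SDC-Factoring (Definition 5). -/
def IsFactor (r : Atom S → Atom S → Prop) (p concl : CClause S) : Prop :=
  ∃ (Γ Δ : Multiset (Atom S)) (A B : Atom S) (π π' : Constr S) (σ : Subst S),
    p = (⟨Γ, A ::ₘ B ::ₘ Δ⟩, π) ∧
    IsMGU σ A B ∧
    NoSel ⟨Γ, A ::ₘ B ::ₘ Δ⟩ ∧
    MaxIn r (A.subst σ) (Clause.subst σ ⟨Γ, B ::ₘ Δ⟩) (π.subst σ) ∧
    IsNormOf π' (π.subst σ) ∧
    π'.Solvable ∧
    concl = (Clause.subst σ ⟨Γ, A ::ₘ Δ⟩, π')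

/-- Redundancy of a constrained clause in a clause set. -/
def RedundantIn (r : Atom S → Atom S → Prop) (c : CClause S) (N : Set (CClause S)) : Prop :=
  ∀ D ∈ groundOf c, ∃ L : List (Clause S),
    (∀ D' ∈ L, D' ∈ groundN N ∧ ClauseLT r D' D) ∧
    ∀ I : HIntp S, (∀ D' ∈ L, SatGround I D') → SatGround I D

/-- Saturation up to redundancy (Definition 7). -/
def SaturatedUR (r : Atom S → Atom S → Prop) (N : Set (CClause S)) : Prop :=
  (∀ p1 ∈ N, ∀ p2 ∈ N, ∀ c, IsResolvent r p1 p2 c →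
     RedundantIn r c N ∨ groundOf c ⊆ groundN N) ∧
  (∀ p ∈ N, ∀ c, IsFactor r p c → RedundantIn r c N ∨ groundOf c ⊆ groundN N)

/-! ### Partial minimal model construction (Definition 9) -/

def ProducedAtoms (r : Atom S → Atom S → Prop) (G : Set (Clause S))
    (prod : Clause S → Set (Atom S)) (D : Clause S) : HIntp S :=
  {A | ∃ D' ∈ G, ClauseLT r D' D ∧ A ∈ prod D'}

/-- `prod` assigns to each ground clause its produced atoms according to the
    superposition partial model construction. -/
def IsModelConstruction (r : Atom S → Atom S → Prop) (G : Set (Clause S))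
    (prod : Clause S → Set (Atom S)) : Prop :=
  (∀ D, D ∉ G → prod D = ∅) ∧
  ∀ D ∈ G, prod D =
    {A | ∃ Δ, D.succ = A ::ₘ Δ ∧
      (∀ L ∈ (Clause.lits ⟨D.ante, Δ⟩), LitLT r L (true, A)) ∧
      NoSel D ∧ ¬ SatGround (ProducedAtoms r G prod D) D}

def ConstructedModel (G : Set (Clause S)) (prod : Clause S → Set (Atom S)) : HIntp S :=
  {A | ∃ D ∈ G, A ∈ prod D}

/-! ### The MSL(SDC) fragment -/

/-- MSL clauses: monadic predicates, positive literals shallow and linear,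
    positive atoms pairwise variable disjoint (no equations occur,
    since atoms are predicate atoms). -/
def IsMSL (C : Clause S) : Prop :=
  (∀ A ∈ C.ante, A.Monadic) ∧ (∀ A ∈ C.succ, A.Monadic) ∧
  (∀ A ∈ C.succ, ∀ t ∈ A.args, t.depth ≤ 1) ∧
  Multiset.Nodup ((C.succ.map (fun A => (A.varList : Multiset Nat))).sum)

def IsMSLSDC (c : CClause S) : Prop := IsMSL c.1 ∧ c.2.WF

/-! ### Condensation -/

/-- `(C';π')` is a condensation of `(C;π)`. -/
def Condensation (c' c : CClause S) : Prop :=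
  (c'.1.ante ≤ c.1.ante ∧ c'.1.succ ≤ c.1.succ ∧ c'.1 ≠ c.1) ∧
  ∃ σ : Subst S,
    c.2.subst σ = c'.2 ∧ Constr.Sub c'.2 c.2 ∧
    (∀ A ∈ c.1.ante, ∃ A' ∈ c'.1.ante, A.subst σ = A') ∧
    (∀ A ∈ c.1.succ, ∃ A' ∈ c'.1.succ, A.subst σ = A')

/-! ### The approximation transformations -/

open Classical in
/-- Monadic projection of an atom: `P(t⃗) ↦ T(f_P(t⃗))`. -/
noncomputable def projAtom (P T : S.Pred) (fP : S.Func) (A : Atom S) : Atom S :=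
  if A.pred = P then ⟨T, [Term.app fP A.args]⟩ else A

noncomputable def projClause (P T : S.Pred) (fP : S.Func) (C : Clause S) : Clause S :=
  ⟨C.ante.map (projAtom P T fP), C.succ.map (projAtom P T fP)⟩

noncomputable def projCC (P T : S.Pred) (fP : S.Func) (c : CClause S) : CClause S :=
  (projClause P T fP c.1, c.2)

/-- The Monadic transformation step. -/
def MonadicStep (P T : S.Pred) (fP : S.Func) (N N' : Set (CClause S)) : Prop :=
  P ≠ T ∧
  (∃ c ∈ N, ∃ A ∈ c.1.ante + c.1.succ, A.pred = P ∧ ¬ A.Monadic) ∧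
  ¬ PredInSet T N ∧ ¬ FuncInSet fP N ∧
  N' = projCC P T fP '' N

/-- The term `f(t⃗₁, s, t⃗₂)` in which `s` occurs at depth one. -/
def shETerm (f : S.Func) (ts₁ ts₂ : List (Term S)) (s : Term S) : Term S :=
  .app f (ts₁ ++ s :: ts₂)

/-- The atom `E[s]ₚ` with `|p| = 2`. -/
def shEAtom (Pr : S.Pred) (as₁ as₂ : List (Term S)) (f : S.Func)
    (ts₁ ts₂ : List (Term S)) (s : Term S) : Atom S :=
  ⟨Pr, as₁ ++ shETerm f ts₁ ts₂ s :: as₂⟩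

/-- The clause `(Γ → E[s]ₚ, Δ; π)`. -/
def shSrc (Γ Δ : Multiset (Atom S)) (π : Constr S) (Pr : S.Pred)
    (as₁ as₂ ts₁ ts₂ : List (Term S)) (f : S.Func) (s : Term S) : CClause S :=
  (⟨Γ, shEAtom Pr as₁ as₂ f ts₁ ts₂ s ::ₘ Δ⟩, π)

/-- The left result `(S(x), Γₗ → E[p/x], Δₗ; π)` of the Shallow transformation. -/
def shLeft (Γl Δl : Multiset (Atom S)) (π : Constr S) (Pr : S.Pred)
    (as₁ as₂ ts₁ ts₂ : List (Term S)) (f : S.Func) (Sp : S.Pred) (x : Nat) : CClause S :=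
  (⟨(⟨Sp, [Term.var x]⟩ : Atom S) ::ₘ Γl,
    shEAtom Pr as₁ as₂ f ts₁ ts₂ (Term.var x) ::ₘ Δl⟩, π)

/-- The right result `(Γᵣ → S(s), Δᵣ; π)` of the Shallow transformation. -/
def shRight (Γr Δr : Multiset (Atom S)) (π : Constr S) (s : Term S) (Sp : S.Pred) : CClause S :=
  (⟨Γr, (⟨Sp, [s]⟩ : Atom S) ::ₘ Δr⟩, π)

/-- Side conditions of the Shallow transformation. -/
def ShallowCond (N : Set (CClause S)) (Γ Δ Γl Γr Δl Δr : Multiset (Atom S)) (π : Constr S)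
    (Pr : S.Pred) (as₁ as₂ ts₁ ts₂ : List (Term S)) (f : S.Func) (s : Term S)
    (Sp : S.Pred) (x : Nat) : Prop :=
  s.IsComplex ∧
  ¬ PredInSet Sp N ∧
  ¬ (shSrc Γ Δ π Pr as₁ as₂ ts₁ ts₂ f s).HasVar x ∧
  Γl.map (Atom.subst (single x s)) + Γr = Γ ∧
  Δl + Δr = Δ ∧
  (∀ (Q : S.Pred) (y : Nat), (⟨Q, [Term.var y]⟩ : Atom S) ∈ Γ →
     (VarInAtom y (shEAtom Pr as₁ as₂ f ts₁ ts₂ (Term.var x)) ∨ ∃ B ∈ Δl, VarInAtom y B) →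
     (⟨Q, [Term.var y]⟩ : Atom S) ∈ Γl) ∧
  (∀ (Q : S.Pred) (y : Nat), (⟨Q, [Term.var y]⟩ : Atom S) ∈ Γ →
     (y ∈ s.varList ∨ ∃ B ∈ Δr, VarInAtom y B) →
     (⟨Q, [Term.var y]⟩ : Atom S) ∈ Γr)

/-- Replacement of one occurrence of variable `x` by `x'` in an atom. -/
def ReplOneAtom (x x' : Nat) (A A' : Atom S) : Prop :=
  ∃ (P : S.Pred) (as₁ as₂ : List (Term S)) (t t' : Term S),
    A = ⟨P, as₁ ++ t :: as₂⟩ ∧ A' = ⟨P, as₁ ++ t' :: as₂⟩ ∧ ReplOne x x' t t'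

/-- The clause `(Γ → E, Δ; π)` transformed by the Linear transformation. -/
def liSrc (Γ Δ : Multiset (Atom S)) (π : Constr S) (E : Atom S) : CClause S :=
  (⟨Γ, E ::ₘ Δ⟩, π)

/-- The result `(Γσ, Γ → E', Δ; π ∧ πσ)` of the Linear transformation,
    `σ = {x ↦ x'}`. -/
def liRes (Γ Δ : Multiset (Atom S)) (π : Constr S) (E' : Atom S) (x x' : Nat) : CClause S :=
  (⟨Γ.map (Atom.subst (single x (Term.var x'))) + Γ, E' ::ₘ Δ⟩,
   π.and (π.subst (single x (Term.var x'))))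

/-- Side conditions of the Linear transformations (both variants): one
    occurrence of the repeated succedent variable `x` is replaced by fresh `x'`. -/
def LinearCond (Γ Δ : Multiset (Atom S)) (π : Constr S) (E E' : Atom S) (x x' : Nat) : Prop :=
  ReplOneAtom x x' E E' ∧
  ¬ (liSrc Γ Δ π E).HasVar x' ∧
  (VarInAtom x E' ∨ ∃ A ∈ Δ, VarInAtom x A)

/-- The first result `(C; π ∧ x ≠ t)` of the Refinement transformation. -/
def refLeft (c : CClause S) (x : Nat) (t : Term S) : CClause S :=
  (c.1, c.2.and (.conj [(Term.var x, t)]))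

/-- The second result `(C;π){x ↦ t}` of the Refinement transformation. -/
def refRight (c : CClause S) (x : Nat) (t : Term S) : CClause S :=
  CClause.subst (single x t) c

/-- Side conditions of the Refinement transformation. -/
def RefineClause (c : CClause S) (x : Nat) (t : Term S) : Prop :=
  ((∃ A ∈ c.1.ante, VarInAtom x A) ∨ ∃ A ∈ c.1.succ, VarInAtom x A) ∧
  Straight t ∧
  (∀ y ∈ t.varList, ¬ c.HasVar y)

/-- The data of a single approximation transformation step. -/
inductive StepData (S : Sig) : Type 1 where
  | mo (P T : S.Pred) (fP : S.Func)
  | sh (Γ Δ : Multiset (Atom S)) (π : Constr S) (Pr : S.Pred)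
       (as₁ as₂ ts₁ ts₂ : List (Term S)) (f : S.Func) (s : Term S)
       (Sp : S.Pred) (x : Nat) (Γl Γr Δl Δr : Multiset (Atom S))
  | li (Γ Δ : Multiset (Atom S)) (π : Constr S) (E E' : Atom S) (x x' : Nat)
  | ref (c : CClause S) (x : Nat) (t : Term S)

/-- One step of the approximation rewrite system `⇒_AP` on clause sets,
    labelled with its data. -/
inductive DStep : Set (CClause S) → StepData S → Set (CClause S) → Prop
  | mo (N N' : Set (CClause S)) (P T : S.Pred) (fP : S.Func) :
      MonadicStep P T fP N N' → DStep N (.mo P T fP) N'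
  | sh (M : Set (CClause S)) (Γ Δ Γl Γr Δl Δr : Multiset (Atom S)) (π : Constr S)
      (Pr : S.Pred) (as₁ as₂ ts₁ ts₂ : List (Term S)) (f : S.Func) (s : Term S)
      (Sp : S.Pred) (x : Nat) :
      shSrc Γ Δ π Pr as₁ as₂ ts₁ ts₂ f s ∉ M →
      ShallowCond (insert (shSrc Γ Δ π Pr as₁ as₂ ts₁ ts₂ f s) M)
        Γ Δ Γl Γr Δl Δr π Pr as₁ as₂ ts₁ ts₂ f s Sp x →
      DStep (insert (shSrc Γ Δ π Pr as₁ as₂ ts₁ ts₂ f s) M)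
        (.sh Γ Δ π Pr as₁ as₂ ts₁ ts₂ f s Sp x Γl Γr Δl Δr)
        (insert (shLeft Γl Δl π Pr as₁ as₂ ts₁ ts₂ f Sp x)
          (insert (shRight Γr Δr π s Sp) M))
  | li (M : Set (CClause S)) (Γ Δ : Multiset (Atom S)) (π : Constr S)
      (E E' : Atom S) (x x' : Nat) :
      liSrc Γ Δ π E ∉ M → LinearCond Γ Δ π E E' x x' →
      DStep (insert (liSrc Γ Δ π E) M) (.li Γ Δ π E E' x x')
        (insert (liRes Γ Δ π E' x x') M)
  | ref (M : Set (CClause S)) (c : CClause S) (x : Nat) (t : Term S) :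
      c ∉ M → RefineClause c x t →
      DStep (insert c M) (.ref c x t)
        (insert (refLeft c x t) (insert (refRight c x t) M))

/-- Priority class of a rule: Refinement 0 > Monadic 1 > Shallow 2 > Linear 3. -/
def StepData.rule : StepData S → Nat
  | .ref _ _ _ => 0
  | .mo _ _ _ => 1
  | .sh _ _ _ _ _ _ _ _ _ _ _ _ _ _ _ _ => 2
  | .li _ _ _ _ _ _ _ => 3

def RuleApplicable (k : Nat) (N : Set (CClause S)) : Prop :=
  ∃ d N', DStep N d N' ∧ StepData.rule d = k

/-- A `⇒_AP` step respecting the rule priorities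
    Refinement > Monadic > Shallow > Linear. -/
def APStepPrio (N : Set (CClause S)) (d : StepData S) (N' : Set (CClause S)) : Prop :=
  DStep N d N' ∧
  (d.rule = 2 → ¬ RuleApplicable 1 N) ∧
  (d.rule = 3 → ¬ RuleApplicable 1 N ∧ ¬ RuleApplicable 2 N)

/-- A finite sequence of approximation steps. -/
inductive DChain : Set (CClause S) → List (StepData S) → Set (CClause S) → Prop
  | nil (N : Set (CClause S)) : DChain N [] N
  | cons {N N' N'' : Set (CClause S)} (d : StepData S) (ls : List (StepData S)) :
      DStep N d N' → DChain N' ls N'' → DChain N (d :: ls) N''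

/-- Reverse monadic projection of an interpretation along an approximation
    sequence: each encoded atom `T(f_P(t⃗))` is replaced back by `P(t⃗)`. -/
noncomputable def revProj : List (StepData S) → HIntp S → HIntp S
  | [], I => I
  | (StepData.mo P T fP) :: ls, I => projAtom P T fP ⁻¹' (revProj ls I)
  | _ :: ls, I => revProj ls I

/-! ### Conflicting cores -/

/-- A (complete) ground conflicting core of a clause set `N`. -/
def IsGroundConflCore (Nb : Set (Clause S)) (N : Set (CClause S)) : Prop :=
  Nb.Finite ∧ (∀ D ∈ Nb, D.IsGround) ∧
  (¬ ∃ I : HIntp S, ∀ D ∈ Nb, SatGround I D) ∧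
  (∀ D ∈ Nb, ∃ c ∈ N, GroundInstanceModDup D c)

def CompleteCore (Nb : Set (Clause S)) : Prop :=
  (∀ D ∈ Nb, ∀ A ∈ D.ante, ∃ D' ∈ Nb, A ∈ D'.succ) ∧
  (∀ D ∈ Nb, ∀ A ∈ D.succ, ∃ D' ∈ Nb, A ∈ D'.ante)

/-- A conflicting core `(N^⊥; π)` of a constrained clause set (Definition 15). -/
def IsConflictingCore (Nb : Set (Clause S)) (π : Constr S) (N : Set (CClause S)) : Prop :=
  Nb.Finite ∧ π.Solvable ∧
  (∀ δ, Solves δ π → ¬ ∃ I : HIntp S, ∀ D ∈ Nb, SatGround I (D.subst δ)) ∧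
  (∀ D ∈ Nb, ∃ c ∈ N, InstanceOfCCModDup (D, π) c)

/-- Lift-conflicts (Definition 17). -/
def IsLiftConflict (d : StepData S) (Nb : Set (Clause S)) (Cc : Clause S) : Prop :=
  match d with
  | .li Γ Δ π E E' x x' =>
      Cc ∈ Nb ∧ GroundInstanceModDup Cc (liRes Γ Δ π E' x x') ∧
      ¬ GroundInstanceModDup Cc (liSrc Γ Δ π E)
  | .sh Γ Δ π Pr as₁ as₂ ts₁ ts₂ f s Sp x Γl Γr Δl Δr =>
      (∃ δl δr : Subst S, Solves δl π ∧ Solves δr π ∧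
         Clause.subst δl (shLeft Γl Δl π Pr as₁ as₂ ts₁ ts₂ f Sp x).1 ∈ Nb ∧
         Clause.subst δr (shRight Γr Δr π s Sp).1 ∈ Nb ∧
         δl x = s.subst δr ∧
         Cc = ⟨Γl.map (Atom.subst δl) + Γr.map (Atom.subst δr),
               Atom.subst δl (shEAtom Pr as₁ as₂ f ts₁ ts₂ (Term.var x)) ::ₘ
                 (Δl.map (Atom.subst δl) + Δr.map (Atom.subst δr))⟩) ∧
      ¬ GroundInstanceModDup Cc (shSrc Γ Δ π Pr as₁ as₂ ts₁ ts₂ f s)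
  | _ => False

/-! ### Parent and ancestor relations -/

/-- The clause is not the one transformed by the step. -/
def UnchangedBy : StepData S → CClause S → Prop
  | .mo _ _ _, _ => False
  | .sh Γ Δ π Pr as₁ as₂ ts₁ ts₂ f s _ _ _ _ _ _, c =>
      c ≠ shSrc Γ Δ π Pr as₁ as₂ ts₁ ts₂ f s
  | .li Γ Δ π E _ _ _, c => c ≠ liSrc Γ Δ π E
  | .ref c0 _ _, c => c ≠ c0

/-- The parent clause relation (Definition 12, without shallow resolvents). -/
def PCrel (d : StepData S) (c c' : CClause S) : Prop :=
  (UnchangedBy d c ∧ c' = c) ∨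
  match d with
  | .mo P T fP => c' = projCC P T fP c
  | .sh Γ Δ π Pr as₁ as₂ ts₁ ts₂ f s Sp x Γl Γr Δl Δr =>
      c = shSrc Γ Δ π Pr as₁ as₂ ts₁ ts₂ f s ∧
      (c' = shLeft Γl Δl π Pr as₁ as₂ ts₁ ts₂ f Sp x ∨ c' = shRight Γr Δr π s Sp)
  | .li Γ Δ π E E' x x' => c = liSrc Γ Δ π E ∧ c' = liRes Γ Δ π E' x x'
  | .ref c0 x t => c = c0 ∧ (c' = refLeft c0 x t ∨ c' = refRight c0 x t)

/-- The parent variable relation (Definition 13). -/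
def PV (d : StepData S) (c : CClause S) (x : Nat) (c' : CClause S) (y : Nat) : Prop :=
  (PCrel d c c' ∧ c.HasVar x ∧ c'.HasVar x ∧ y = x) ∨
  (match d with
   | .li Γ Δ π E E' x0 x0' =>
       c = liSrc Γ Δ π E ∧ c' = liRes Γ Δ π E' x0 x0' ∧ x = x0 ∧ y = x0'
   | _ => False)

/-- The parent literal position relation (Definition 14). A literal position
    is a pair of a literal and a position within it. -/
def PLP (d : StepData S) (c : CClause S) (L : Lit S) (r : List Nat)
    (c' : CClause S) (L' : Lit S) (r' : List Nat) : Prop :=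
  (UnchangedBy d c ∧ c' = c ∧ L' = L ∧ r' = r ∧ LitIn L c.1 ∧ L.2.HasPos r) ∨
  match d with
  | .mo P T fP =>
      c' = projCC P T fP c ∧ LitIn L c.1 ∧ L.2.HasPos r ∧
      ((L.2.pred ≠ P ∧ L' = L ∧ r' = r) ∨
       (L.2.pred = P ∧ L' = (L.1, ⟨T, [Term.app fP L.2.args]⟩) ∧
         ((r = [] ∧ r' = []) ∨ ∃ i rr, r = i :: rr ∧ r' = 0 :: i :: rr)))
  | .sh Γ Δ π Pr as₁ as₂ ts₁ ts₂ f s Sp x Γl Γr Δl Δr =>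
      c = shSrc Γ Δ π Pr as₁ as₂ ts₁ ts₂ f s ∧
      ( (c' = shLeft Γl Δl π Pr as₁ as₂ ts₁ ts₂ f Sp x ∧
          ( (L = (true, shEAtom Pr as₁ as₂ f ts₁ ts₂ s) ∧
             L' = (true, shEAtom Pr as₁ as₂ f ts₁ ts₂ (Term.var x)) ∧
             r' = r ∧ (shEAtom Pr as₁ as₂ f ts₁ ts₂ (Term.var x)).HasPos r) ∨
            (L = (true, shEAtom Pr as₁ as₂ f ts₁ ts₂ s) ∧ r = [as₁.length, ts₁.length] ∧
             L' = (false, (⟨Sp, [Term.var x]⟩ : Atom S)) ∧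
             (⟨Sp, [Term.var x]⟩ : Atom S).HasPos r') ∨
            (∃ A ∈ Γl, L = (false, A.subst (single x s)) ∧ L' = (false, A) ∧
               r' = r ∧ A.HasPos r) ∨
            (∃ A ∈ Δl, L = (true, A) ∧ L' = (true, A) ∧ r' = r ∧ A.HasPos r))) ∨
        (c' = shRight Γr Δr π s Sp ∧
          ( (L = (true, shEAtom Pr as₁ as₂ f ts₁ ts₂ s) ∧ r = [as₁.length, ts₁.length] ∧
             L' = (true, (⟨Sp, [s]⟩ : Atom S)) ∧ r' = []) ∨
            (∃ rr, L = (true, shEAtom Pr as₁ as₂ f ts₁ ts₂ s) ∧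
               r = as₁.length :: ts₁.length :: rr ∧
               L' = (true, (⟨Sp, [s]⟩ : Atom S)) ∧ r' = 0 :: rr ∧ Term.HasPos s rr) ∨
            (∃ A ∈ Γr, L = (false, A) ∧ L' = (false, A) ∧ r' = r ∧ A.HasPos r) ∨
            (∃ A ∈ Δr, L = (true, A) ∧ L' = (true, A) ∧ r' = r ∧ A.HasPos r))) )
  | .li Γ Δ π E E' x x' =>
      c = liSrc Γ Δ π E ∧ c' = liRes Γ Δ π E' x x' ∧
      ( (L = (true, E) ∧ L' = (true, E') ∧ r' = r ∧ E'.HasPos r) ∨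
        (∃ A ∈ Δ, L = (true, A) ∧ L' = (true, A) ∧ r' = r ∧ A.HasPos r) ∨
        (∃ A ∈ Γ, L = (false, A) ∧ L' = (false, A.subst (single x (Term.var x'))) ∧
           r' = r ∧ A.HasPos r) ∨
        (∃ A ∈ Γ, L = (false, A) ∧ L' = (false, A) ∧ r' = r ∧ A.HasPos r) )
  | .ref c0 x t =>
      c = c0 ∧ LitIn L c.1 ∧ L.2.HasPos r ∧
      ( (c' = refLeft c0 x t ∧ L' = L ∧ r' = r) ∨
        (c' = refRight c0 x t ∧ L' = (L.1, L.2.subst (single x t)) ∧ r' = r) )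

/-- Ancestor clause relation along an approximation sequence. -/
inductive AncC : List (StepData S) → CClause S → CClause S → Prop
  | nil (c : CClause S) : AncC [] c c
  | cons {d : StepData S} {ls : List (StepData S)} {c c' c'' : CClause S} :
      PCrel d c c' → AncC ls c' c'' → AncC (d :: ls) c c''

/-- Ancestor literal position relation along an approximation sequence. -/
inductive AncLP : List (StepData S) → CClause S → Lit S → List Nat →
    CClause S → Lit S → List Nat → Prop
  | nil (c : CClause S) (L : Lit S) (r : List Nat) : AncLP [] c L r c L r
  | cons {d : StepData S} {ls : List (StepData S)} {c c' c'' : CClause S}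
      {L L' L'' : Lit S} {r r' r'' : List Nat} :
      PLP d c L r c' L' r' → AncLP ls c' L' r' c'' L'' r'' →
      AncLP (d :: ls) c L r c'' L'' r''

/-- Ancestor variable relation along an approximation sequence. -/
inductive AncV : List (StepData S) → CClause S → Nat → CClause S → Nat → Prop
  | nil (c : CClause S) (x : Nat) : AncV [] c x c x
  | cons {d : StepData S} {ls : List (StepData S)} {c c' c'' : CClause S}
      {x y z : Nat} :
      PV d c x c' y → AncV ls c' y c'' z → AncV (d :: ls) c x c'' z

/-! ### Constrained term skeletons and descendants -/

/-- One step of the constrained term skeleton transformation: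
    `(t[x]_{p,q}; π) ⇒ (t[q/x']; π ∧ π{x ↦ x'})`. -/
inductive SktStep : Term S × Constr S → Term S × Constr S → Prop
  | step (t t' : Term S) (x x' : Nat) (π : Constr S) :
      ReplOne x x' t t' → x ∈ t'.varList → x' ∉ t.varList → ¬ π.HasVar x' →
      SktStep (t, π) (t', π.and (π.subst (single x (Term.var x'))))

/-- `(u, π')` is the constrained term skeleton of `(t, π)`. -/
def IsSktOf (uπ tπ : Term S × Constr S) : Prop :=
  Relation.ReflTransGen SktStep tπ uπ ∧ ∀ z, ¬ SktStep uπ z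

/-- Descendant relation (Definition 16): `D = C'δ` is a descendant of `(C;π)`
    and its literal `L'δ` maps to the literal position `(L, r)` of `(C;π)`. -/
def DescRel (ls : List (StepData S)) (c c' : CClause S) (δ : Subst S)
    (Lg : Lit S) (L : Lit S) (r : List Nat) : Prop :=
  ∃ L' : Lit S, Lg = (L'.1, L'.2.subst δ) ∧ LitIn Lg (c'.1.subst δ) ∧
    AncLP ls c L r c' L' []

/-! ### Saturation steps (inference, condensation, variant removal) -/

inductive SatStep (r : Atom S → Atom S → Prop) : Set (CClause S) → Set (CClause S) → Prop
  | infer (N : Set (CClause S)) (c : CClause S) :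
      (∃ p1 ∈ N, ∃ p2 ∈ N, IsResolvent r p1 p2 c) → SatStep r N (insert c N)
  | factor (N : Set (CClause S)) (c : CClause S) :
      (∃ p ∈ N, IsFactor r p c) → SatStep r N (insert c N)
  | condense (N : Set (CClause S)) (c c' : CClause S) :
      c ∈ N → Condensation c' c → SatStep r N (insert c' (N \ {c}))
  | delVariant (N : Set (CClause S)) (c c' : CClause S) :
      c ∈ N → c' ∈ N → c ≠ c' → groundOf c = groundOf c' → SatStep r N (N \ {c})

/-- Variables shared between two constrained clauses. -/
def ShVar (c c' : CClause S) (v : Nat) : Prop := c.HasVar v ∧ c'.HasVar v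

/-- The shallow ρ-resolvent (Definition 11):
    `(Γₗ{x ↦ sρ}, Γᵣρ → E[p/sρ], Δₗ, Δᵣρ; π ∧ πρ)`. -/
def shResolvent (Γl Γr Δl Δr : Multiset (Atom S)) (π : Constr S) (Pr : S.Pred)
    (as₁ as₂ ts₁ ts₂ : List (Term S)) (f : S.Func) (s : Term S) (x : Nat)
    (ρ : Subst S) : CClause S :=
  (⟨Γl.map (Atom.subst (single x (s.subst ρ))) + Γr.map (Atom.subst ρ),
    shEAtom Pr as₁ as₂ f ts₁ ts₂ (s.subst ρ) ::ₘ (Δl + Δr.map (Atom.subst ρ))⟩,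
   π.and (π.subst ρ))



/-! ### Auxiliary lemmas -/

theorem Term.myrec {P : Term S → Prop} (hv : ∀ x, P (.var x))
    (ha : ∀ f ts, (∀ t ∈ ts, P t) → P (.app f ts)) : ∀ t, P t
  | .var x => hv x
  | .app f ts => ha f ts (fun t ht => Term.myrec hv ha t)
  decreasing_by simp_wf; have := List.sizeOf_lt_of_mem ht; omega

theorem subst_app (σ : Subst S) (f : S.Func) (ts : List (Term S)) :
    Term.subst σ (.app f ts) = .app f (ts.map (Term.subst σ)) := by
  rw [Term.subst]; simp

theorem subst_var (σ : Subst S) (y : Nat) : Term.subst σ (.var y) = σ y := by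
  rw [Term.subst]

theorem varList_app (f : S.Func) (ts : List (Term S)) :
    Term.varList (Term.app f ts) = (ts.map Term.varList).flatten := by
  rw [Term.varList]; simp

theorem varList_subst (σ : Subst S) (t : Term S) :
    (t.subst σ).varList = t.varList.flatMap (fun y => (σ y).varList) := by
  induction t using Term.myrec with
  | hv x => simp [Term.subst, Term.varList]
  | ha f ts ih =>
    rw [subst_app, varList_app, varList_app, List.map_map]
    induction ts with
    | nil => simp
    | cons a l ihl =>
      simp only [List.map_cons, List.flatten_cons, List.flatMap_append, Function.comp]
      rw [ihl (fun t ht => ih t (List.mem_cons_of_mem _ ht)),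
        ih a (List.mem_cons_self)]

theorem Term.subst_congr {σ τ : Subst S} {t : Term S}
    (h : ∀ y ∈ t.varList, σ y = τ y) : t.subst σ = t.subst τ := by
  induction t using Term.myrec with
  | hv x => simpa [Term.subst, Term.varList] using h x (by simp [Term.varList])
  | ha f ts ih =>
    rw [subst_app, subst_app]
    congr 1
    apply List.map_congr_left
    intro u hu
    apply ih u hu
    intro y hy
    apply h
    rw [varList_app, List.mem_flatten]
    exact ⟨u.varList, List.mem_map_of_mem hu, hy⟩

theorem Term.subst_comp (σ τ : Subst S) (t : Term S) :
    (t.subst σ).subst τ = t.subst (fun y => (σ y).subst τ) := by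
  induction t using Term.myrec with
  | hv x => simp [Term.subst]
  | ha f ts ih =>
    rw [subst_app, subst_app, subst_app, List.map_map]
    exact congrArg _ (List.map_congr_left fun u hu => ih u hu)

theorem isGround_subst {δ : Subst S} (hδ : IsGroundSubst δ) (t : Term S) :
    (t.subst δ).IsGround := by
  unfold Term.IsGround
  rw [varList_subst]
  exact List.flatMap_eq_nil_iff.2 fun y _ => hδ y

theorem ground_vars {σ : Subst S} {t : Term S} (h : (t.subst σ).IsGround) :
    ∀ y ∈ t.varList, (σ y).IsGround := by
  intro y hy
  unfold Term.IsGround at h ⊢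
  rw [varList_subst] at h
  have := List.flatMap_eq_nil_iff.1 h y hy
  exact this

theorem Atom.subst_congr {σ τ : Subst S} {A : Atom S}
    (h : ∀ y ∈ A.varList, σ y = τ y) : A.subst σ = A.subst τ := by
  unfold Atom.subst
  congr 1
  apply List.map_congr_left
  intro u hu
  apply Term.subst_congr
  intro y hy
  apply h
  unfold Atom.varList
  rw [List.mem_flatten]
  exact ⟨u.varList, List.mem_map_of_mem hu, hy⟩

theorem Atom.subst_comp (σ τ : Subst S) (A : Atom S) :
    (A.subst σ).subst τ = A.subst (fun y => (σ y).subst τ) := by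
  unfold Atom.subst
  simp [List.map_map, Function.comp, Term.subst_comp]

theorem Atom.subst_congr_fun {σ τ : Subst S} (h : ∀ y, σ y = τ y) (A : Atom S) :
    A.subst σ = A.subst τ := Atom.subst_congr fun y _ => h y

theorem mem_varList_of_arg {A : Atom S} {u : Term S} {y : Nat}
    (hu : u ∈ A.args) (hy : y ∈ u.varList) : y ∈ A.varList := by
  unfold Atom.varList
  rw [List.mem_flatten]
  exact ⟨u.varList, List.mem_map_of_mem hu, hy⟩

theorem replOne_mem_varList {x x' : Nat} {t t' : Term S} (h : ReplOne x x' t t') :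
    x ∈ t.varList := by
  induction h with
  | var => simp [Term.varList]
  | app f ts₁ ts₂ t t' h ih =>
    rw [varList_app, List.mem_flatten]
    exact ⟨t.varList, List.mem_map_of_mem (by simp), ih⟩

theorem replOne_subst_eq {x x' : Nat} {t t' : Term S} (h : ReplOne x x' t t')
    (σ : Subst S) (hσ : σ x' = σ x) : t'.subst σ = t.subst σ := by
  induction h with
  | var => simpa [Term.subst] using hσ
  | app f ts₁ ts₂ t t' h ih => rw [subst_app, subst_app]; simp [ih]

theorem update_ground {δ : Subst S} {v : Term S} (hδ : IsGroundSubst δ)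
    (hv : v.IsGround) (x : Nat) : IsGroundSubst (Function.update δ x v) := by
  intro y
  rcases eq_or_ne y x with rfl | h
  · simpa using hv
  · simpa [Function.update_of_ne h] using hδ y


theorem shEAtom_subst_eq (Pr : S.Pred) (as₁ as₂ ts₁ ts₂ : List (Term S)) (f : S.Func)
    (u v : Term S) (δ' δ : Subst S)
    (hu : u.subst δ' = v.subst δ)
    (h : ∀ w ∈ as₁ ++ as₂ ++ ts₁ ++ ts₂, w.subst δ' = w.subst δ) :
    (shEAtom Pr as₁ as₂ f ts₁ ts₂ u).subst δ' = (shEAtom Pr as₁ as₂ f ts₁ ts₂ v).subst δ := by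
  have h1 : as₁.map (Term.subst δ') = as₁.map (Term.subst δ) :=
    List.map_congr_left fun w hw => h w (by simp [hw])
  have h2 : as₂.map (Term.subst δ') = as₂.map (Term.subst δ) :=
    List.map_congr_left fun w hw => h w (by simp [hw])
  have h3 : ts₁.map (Term.subst δ') = ts₁.map (Term.subst δ) :=
    List.map_congr_left fun w hw => h w (by simp [hw])
  have h4 : ts₂.map (Term.subst δ') = ts₂.map (Term.subst δ) :=
    List.map_congr_left fun w hw => h w (by simp [hw])
  unfold shEAtom shETerm Atom.subst
  simp only [List.map_append, List.map_cons, subst_app]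
  rw [h1, h2, h3, h4, hu]

theorem shEAtom_var_sub (Pr : S.Pred) (as₁ as₂ ts₁ ts₂ : List (Term S)) (f : S.Func)
    (u : Term S) :
    ∀ w ∈ as₁ ++ as₂ ++ ts₁ ++ ts₂, ∀ y ∈ w.varList,
      y ∈ (shEAtom Pr as₁ as₂ f ts₁ ts₂ u).varList := by
  intro w hw y hy
  simp only [List.mem_append] at hw
  rcases hw with ((hw | hw) | hw) | hw
  · exact mem_varList_of_arg (A := shEAtom Pr as₁ as₂ f ts₁ ts₂ u) (by simp [shEAtom, hw]) hy
  · exact mem_varList_of_arg (A := shEAtom Pr as₁ as₂ f ts₁ ts₂ u) (by simp [shEAtom, hw]) hy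
  · refine mem_varList_of_arg (A := shEAtom Pr as₁ as₂ f ts₁ ts₂ u)
      (u := shETerm f ts₁ ts₂ u) (by simp [shEAtom]) ?_
    unfold shETerm
    rw [varList_app, List.mem_flatten]
    exact ⟨w.varList, List.mem_map_of_mem (by simp [hw]), hy⟩
  · refine mem_varList_of_arg (A := shEAtom Pr as₁ as₂ f ts₁ ts₂ u)
      (u := shETerm f ts₁ ts₂ u) (by simp [shEAtom]) ?_
    unfold shETerm
    rw [varList_app, List.mem_flatten]
    exact ⟨w.varList, List.mem_map_of_mem (by simp [hw]), hy⟩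

theorem projAtom_subst (P T : S.Pred) (fP : S.Func) (δ : Subst S) (A : Atom S) :
    (projAtom P T fP A).subst δ = projAtom P T fP (A.subst δ) := by
  by_cases h : A.pred = P
  · simp [projAtom, h, Atom.subst, subst_app]
  · simp [projAtom, h, Atom.subst]

theorem projClause_subst (P T : S.Pred) (fP : S.Func) (δ : Subst S) (C : Clause S) :
    (projClause P T fP C).subst δ = projClause P T fP (C.subst δ) := by
  simp [projClause, Clause.subst, Multiset.map_map, Function.comp, projAtom_subst]

theorem satGround_mo {P T : S.Pred} {fP : S.Func} {J : HIntp S} {D : Clause S}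
    (h : SatGround J (projClause P T fP D)) :
    SatGround (projAtom P T fP ⁻¹' J) D := by
  rcases h with ⟨A, hA, hAJ⟩ | ⟨A, hA, hAJ⟩
  · simp only [projClause, Multiset.mem_map] at hA
    obtain ⟨B, hB, rfl⟩ := hA
    exact Or.inl ⟨B, hB, hAJ⟩
  · simp only [projClause, Multiset.mem_map] at hA
    obtain ⟨B, hB, rfl⟩ := hA
    exact Or.inr ⟨B, hB, hAJ⟩

/-- Interpretation transformation associated to a single step. -/
noncomputable def stepProj : StepData S → HIntp S → HIntp S
  | .mo P T fP, I => projAtom P T fP ⁻¹' I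
  | .sh _ _ _ _ _ _ _ _ _ _ _ _ _ _ _ _, I => I
  | .li _ _ _ _ _ _ _, I => I
  | .ref _ _ _, I => I

theorem revProj_cons (d : StepData S) (ls : List (StepData S)) (I : HIntp S) :
    revProj (d :: ls) I = stepProj d (revProj ls I) := by
  cases d <;> rfl

theorem step_lift {N N' : Set (CClause S)} {d : StepData S} {J : HIntp S}
    (hstep : DStep N d N') (hJ : SatSet J N') : SatSet (stepProj d J) N := by
  cases hstep with
  | mo N N' P T fP h =>
    obtain ⟨hPT, -, -, -, rfl⟩ := h
    intro c hc D hD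
    obtain ⟨δ, hδ, rfl⟩ := hD
    have hc' : projCC P T fP c ∈ projCC P T fP '' N := ⟨c, hc, rfl⟩
    have h2 := hJ _ hc' ((projClause P T fP c.1).subst δ) ⟨δ, hδ, rfl⟩
    rw [projClause_subst] at h2
    exact satGround_mo h2
  | sh M Γ Δ Γl Γr Δl Δr π Pr as₁ as₂ ts₁ ts₂ f s Sp x hnm hcond =>
    obtain ⟨-, -, hxf, hΓ, hΔ, -, -⟩ := hcond
    have hΓx : ∀ A ∈ Γ, ¬ VarInAtom x A := fun A hA h => hxf (Or.inl ⟨A, hA, h⟩)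
    have hEx : ¬ VarInAtom x (shEAtom Pr as₁ as₂ f ts₁ ts₂ s) := fun h =>
      hxf (Or.inr (Or.inl ⟨_, Multiset.mem_cons_self _ _, h⟩))
    have hΔx : ∀ A ∈ Δ, ¬ VarInAtom x A := fun A hA h =>
      hxf (Or.inr (Or.inl ⟨A, Multiset.mem_cons_of_mem hA, h⟩))
    have hπx : ¬ π.HasVar x := fun h => hxf (Or.inr (Or.inr h))
    intro c hc D hD
    rcases hc with rfl | hc
    · obtain ⟨δ, hδ, rfl⟩ := hD
      cases π with
      | bot => exact hδ.elim
      | conj cs =>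
        have hgr : IsGroundSubst δ := hδ.1
        classical
        set δ' : Subst S := Function.update δ x (s.subst δ) with hδ'def
        have hgr' : IsGroundSubst δ' := update_ground hgr (isGround_subst hgr s) x
        have hδ'x : δ' x = s.subst δ := Function.update_self _ _ _
        have hsolδ' : Solves δ' (Constr.conj cs) := by
          refine ⟨hgr', ?_⟩
          intro p hp
          have heq : p.1.subst δ' = p.1.subst δ :=
            Term.subst_congr fun y hy =>
              Function.update_of_ne
                (fun h => hπx ⟨p, hp, Or.inl (by subst h; exact hy)⟩) _ _
          rw [heq]; exact hδ.2 p hp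
        have hAeq : ∀ A : Atom S, ¬ VarInAtom x A → A.subst δ' = A.subst δ := fun A hA =>
          Atom.subst_congr fun y hy =>
            Function.update_of_ne (fun h => hA (by subst h; exact hy)) _ _
        have hΔl : ∀ A ∈ Δl, A ∈ Δ := fun A hA => by
          rw [← hΔ]; exact Multiset.mem_add.2 (Or.inl hA)
        have hΔr : ∀ A ∈ Δr, A ∈ Δ := fun A hA => by
          rw [← hΔ]; exact Multiset.mem_add.2 (Or.inr hA)
        have hΓr : ∀ A ∈ Γr, A ∈ Γ := fun A hA => by
          rw [← hΓ]; exact Multiset.mem_add.2 (Or.inr hA)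
        have hΓl : ∀ A ∈ Γl, A.subst (single x s) ∈ Γ := fun A hA => by
          rw [← hΓ]; exact Multiset.mem_add.2 (Or.inl (Multiset.mem_map_of_mem _ hA))
        simp only [shSrc, Clause.subst, Multiset.map_cons]
        have hJr := hJ _ (Set.mem_insert_iff.2 (Or.inr (Set.mem_insert _ _))) _
          ⟨δ, hδ, rfl⟩
        simp only [shRight, Clause.subst, Multiset.map_cons] at hJr
        rcases hJr with ⟨B, hB, hBJ⟩ | ⟨B, hB, hBJ⟩
        · rcases Multiset.mem_cons.1 hB with rfl | hB
          · -- B = Sp(sδ) ∈ J : use the left clause with δ'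
            have hJl := hJ _ (Set.mem_insert _ _) _ ⟨δ', hsolδ', rfl⟩
            simp only [shLeft, Clause.subst, Multiset.map_cons] at hJl
            rcases hJl with ⟨A, hA, hAJ⟩ | ⟨A, hA, hAJn⟩
            · rcases Multiset.mem_cons.1 hA with rfl | hA
              · -- the shallow atom itself
                have hkey : (shEAtom Pr as₁ as₂ f ts₁ ts₂ (Term.var x)).subst δ' =
                    (shEAtom Pr as₁ as₂ f ts₁ ts₂ s).subst δ := by
                  apply shEAtom_subst_eq
                  · rw [subst_var, hδ'x]
                  · intro w hw
                    apply Term.subst_congr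
                    intro y hy
                    refine Function.update_of_ne (fun h => hEx ?_) _ _
                    subst h
                    exact shEAtom_var_sub Pr as₁ as₂ ts₁ ts₂ f s w hw y hy
                rw [hkey] at hAJ
                exact Or.inl ⟨_, Multiset.mem_cons_self _ _, hAJ⟩
              · -- positive atom from Δl
                obtain ⟨B₀, hB₀, rfl⟩ := Multiset.mem_map.1 hA
                rw [hAeq B₀ (hΔx B₀ (hΔl B₀ hB₀))] at hAJ
                exact Or.inl ⟨_, Multiset.mem_cons_of_mem
                  (Multiset.mem_map_of_mem _ (hΔl B₀ hB₀)), hAJ⟩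
            · rcases Multiset.mem_cons.1 hA with rfl | hA
              · -- the fresh atom Sp(x): contradiction with Sp(sδ) ∈ J
                exfalso
                apply hAJn
                have hBA : Atom.subst δ' (⟨Sp, [Term.var x]⟩ : Atom S) =
                    Atom.subst δ (⟨Sp, [s]⟩ : Atom S) := by
                  unfold Atom.subst
                  simp only [List.map_cons, List.map_nil, subst_var, hδ'x]
                rw [hBA]
                exact hBJ
              · -- negative atom from Γl
                obtain ⟨B₀, hB₀, rfl⟩ := Multiset.mem_map.1 hA
                have hcomp : B₀.subst δ' = (B₀.subst (single x s)).subst δ := by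
                  rw [Atom.subst_comp]
                  apply Atom.subst_congr_fun
                  intro y
                  rcases eq_or_ne y x with rfl | hne
                  · rw [show (single y s) y = s from by simp [single]]
                    exact hδ'x
                  · rw [show (single x s) y = Term.var y from by simp [single, hne],
                      subst_var]
                    exact Function.update_of_ne hne _ _
                rw [hcomp] at hAJn
                exact Or.inr ⟨_, Multiset.mem_map_of_mem _ (hΓl B₀ hB₀), hAJn⟩
          · -- positive atom from Δr
            obtain ⟨B₀, hB₀, rfl⟩ := Multiset.mem_map.1 hB
            exact Or.inl ⟨_, Multiset.mem_cons_of_mem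
              (Multiset.mem_map_of_mem _ (hΔr B₀ hB₀)), hBJ⟩
        · -- negative atom from Γr
          obtain ⟨B₀, hB₀, rfl⟩ := Multiset.mem_map.1 hB
          exact Or.inr ⟨_, Multiset.mem_map_of_mem _ (hΓr B₀ hB₀), hBJ⟩
    · exact hJ c (Set.mem_insert_iff.2 (Or.inr (Set.mem_insert_iff.2 (Or.inr hc)))) D hD
  | li M Γ Δ π E E' x x' hnm hcond =>
    obtain ⟨hrep, hfresh, -⟩ := hcond
    obtain ⟨P, es₁, es₂, u, u', hE, hE', hro⟩ := hrep
    -- x occurs in E, x' does not occur anywhere in the source clause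
    have hxE : x ∈ E.varList := by
      rw [hE]
      exact mem_varList_of_arg (by simp) (replOne_mem_varList hro)
    have hx'E : ¬ VarInAtom x' E := fun h =>
      hfresh (Or.inr (Or.inl ⟨E, Multiset.mem_cons_self _ _, h⟩))
    have hxx' : x ≠ x' := fun h => hx'E (h ▸ hxE)
    have hΓx' : ∀ A ∈ Γ, ¬ VarInAtom x' A := fun A hA h =>
      hfresh (Or.inl ⟨A, hA, h⟩)
    have hΔx' : ∀ A ∈ Δ, ¬ VarInAtom x' A := fun A hA h =>
      hfresh (Or.inr (Or.inl ⟨A, Multiset.mem_cons_of_mem hA, h⟩))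
    have hπx' : ¬ π.HasVar x' := fun h => hfresh (Or.inr (Or.inr h))
    intro c hc D hD
    rcases hc with rfl | hc
    · obtain ⟨δ, hδ, rfl⟩ := hD
      cases π with
      | bot => exact hδ.elim
      | conj cs =>
        have hgr : IsGroundSubst δ := hδ.1
        classical
        set δ'' : Subst S := Function.update δ x' (δ x) with hδ''def
        have hgr'' : IsGroundSubst δ'' := update_ground hgr (hgr x) x'
        have hδ''x : δ'' x = δ x := Function.update_of_ne hxx' _ _
        have hδ''x' : δ'' x' = δ x := Function.update_self _ _ _
        -- pointwise: single x (var x') then δ'' equals δ''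
        have hpt : ∀ y, ((single x (Term.var x')) y).subst δ'' = δ'' y := by
          intro y
          rcases eq_or_ne y x with rfl | hne
          · rw [show (single y (Term.var x')) y = Term.var x' from by simp [single]]
            rw [subst_var, hδ''x', hδ''x]
          · rw [show (single x (Term.var x')) y = Term.var y from by simp [single, hne]]
            rw [subst_var]
        have htermc : ∀ u : Term S, (u.subst (single x (Term.var x'))).subst δ'' = u.subst δ'' := by
          intro u
          rw [Term.subst_comp]
          exact Term.subst_congr fun y _ => hpt y
        have hatomc : ∀ A : Atom S, (A.subst (single x (Term.var x'))).subst δ'' = A.subst δ'' := by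
          intro A
          rw [Atom.subst_comp]
          exact Atom.subst_congr fun y _ => hpt y
        -- δ'' agrees with δ on atoms avoiding x'
        have hAeq : ∀ A : Atom S, ¬ VarInAtom x' A → A.subst δ'' = A.subst δ := by
          intro A hA
          exact Atom.subst_congr fun y hy =>
            Function.update_of_ne (fun h => hA (by subst h; exact hy)) _ _
        have hteq : ∀ p ∈ cs, (p.1 : Term S).subst δ'' = p.1.subst δ := by
          intro p hp
          exact Term.subst_congr fun y hy =>
            Function.update_of_ne (fun h => hπx' ⟨p, hp, Or.inl (by subst h; exact hy)⟩) _ _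
        have hsol : Solves δ'' ((Constr.conj cs).and ((Constr.conj cs).subst (single x (Term.var x')))) := by
          refine ⟨hgr'', ?_⟩
          intro p hp
          rcases List.mem_append.1 hp with hp | hp
          · rw [hteq p hp]
            exact hδ.2 p hp
          · simp only [Constr.subst, List.mem_map] at hp
            obtain ⟨q, hq, rfl⟩ := hp
            simp only
            rw [htermc q.1, hteq q hq]
            exact hδ.2 q hq
        have h2 := hJ _ (Set.mem_insert _ _) _ ⟨δ'', hsol, rfl⟩
        -- normalize the ground instance of the result
        have hE'eq : E'.subst δ'' = E.subst δ := by
          have h1 : E'.subst δ'' = E.subst δ'' := by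
            rw [hE, hE']
            unfold Atom.subst
            simp only [List.map_append, List.map_cons]
            rw [replOne_subst_eq hro δ'' (hδ''x'.trans hδ''x.symm)]
          rw [h1]
          exact hAeq E hx'E
        have hres : (liRes Γ Δ (Constr.conj cs) E' x x').1.subst δ'' =
            Clause.mk (Γ.map (Atom.subst δ) + Γ.map (Atom.subst δ))
              (E.subst δ ::ₘ Δ.map (Atom.subst δ)) := by
          simp only [liRes, Clause.subst, Multiset.map_add, Multiset.map_cons,
            Multiset.map_map, Function.comp]
          congr 1
          · congr 1
            · exact Multiset.map_congr rfl fun A hA => by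
                rw [hatomc A]; exact hAeq A (hΓx' A hA)
            · exact Multiset.map_congr rfl fun A hA => hAeq A (hΓx' A hA)
          · rw [hE'eq]
            congr 1
            exact Multiset.map_congr rfl fun A hA => hAeq A (hΔx' A hA)
        rw [hres] at h2
        rcases h2 with ⟨A, hA, hAJ⟩ | ⟨A, hA, hAJ⟩
        · exact Or.inl ⟨A, by simpa [liSrc, Clause.subst] using hA, hAJ⟩
        · rcases Multiset.mem_add.1 hA with hA | hA
          · exact Or.inr ⟨A, by simpa [liSrc, Clause.subst] using hA, hAJ⟩
          · exact Or.inr ⟨A, by simpa [liSrc, Clause.subst] using hA, hAJ⟩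
    · exact hJ c (Set.mem_insert_iff.2 (Or.inr hc)) D hD
  | ref M c0 x t hnm hcond =>
    obtain ⟨C0, π⟩ := c0
    obtain ⟨hocc, hstraight, hfreshvars⟩ := hcond
    intro c hc D hD
    rcases hc with rfl | hc
    · -- c is the refined clause (C0; π)
      obtain ⟨δ, hδ, rfl⟩ := hD
      cases π with
      | bot => exact hδ.elim
      | conj cs =>
        have hgr : IsGroundSubst δ := hδ.1
        by_cases hinst : IsInstanceOf (δ x) t
        · -- use refRight
          obtain ⟨σ, hσ⟩ := hinst
          classical
          set δ₂ : Subst S := fun y => if y ∈ t.varList then σ y else δ y with hδ₂def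
          have hgr₂ : IsGroundSubst δ₂ := by
            intro y
            by_cases hy : y ∈ t.varList
            · simp only [hδ₂def, if_pos hy]
              exact ground_vars (hσ ▸ hgr x) y hy
            · simp only [hδ₂def, if_neg hy]
              exact hgr y
          have hpt : ∀ y, y ∉ t.varList → ((single x t) y).subst δ₂ = δ y := by
            intro y hy
            rcases eq_or_ne y x with rfl | hne
            · have ht2 : t.subst δ₂ = t.subst σ :=
                Term.subst_congr fun z hz => by simp only [hδ₂def, if_pos hz]
              rw [show (single y t) y = t from by simp [single], ht2, ← hσ]
            · rw [show (single x t) y = Term.var y from by simp [single, hne]]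
              show Term.subst δ₂ (.var y) = δ y
              simp only [Term.subst, hδ₂def, if_neg hy]
          have hterm : ∀ u : Term S, (∀ y ∈ u.varList, y ∉ t.varList) →
              (u.subst (single x t)).subst δ₂ = u.subst δ := by
            intro u hu
            rw [Term.subst_comp]
            exact Term.subst_congr fun y hy => hpt y (hu y hy)
          have hatom : ∀ A : Atom S, (∀ y ∈ A.varList, y ∉ t.varList) →
              (A.subst (single x t)).subst δ₂ = A.subst δ := by
            intro A hA
            rw [Atom.subst_comp]
            exact Atom.subst_congr fun y hy => hpt y (hA y hy)
          have hAnte : ∀ A ∈ C0.ante, ∀ y ∈ A.varList, y ∉ t.varList := by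
            intro A hA y hy hyt
            exact hfreshvars y hyt (Or.inl ⟨A, hA, hy⟩)
          have hSucc : ∀ A ∈ C0.succ, ∀ y ∈ A.varList, y ∉ t.varList := by
            intro A hA y hy hyt
            exact hfreshvars y hyt (Or.inr (Or.inl ⟨A, hA, hy⟩))
          have hπv : ∀ p ∈ cs, ∀ y ∈ (p.1 : Term S).varList, y ∉ t.varList := by
            intro p hp y hy hyt
            exact hfreshvars y hyt (Or.inr (Or.inr ⟨p, hp, Or.inl hy⟩))
          have hsol : Solves δ₂ ((Constr.conj cs).subst (single x t)) := by
            refine ⟨hgr₂, ?_⟩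
            intro p hp
            simp only [Constr.subst, List.mem_map] at hp
            obtain ⟨q, hq, rfl⟩ := hp
            simpa [hterm q.1 (hπv q hq)] using hδ.2 q hq
          have hclause : (C0.subst (single x t)).subst δ₂ = C0.subst δ := by
            simp only [Clause.subst, Multiset.map_map, Function.comp]
            congr 1
            · exact Multiset.map_congr rfl fun A hA => hatom A (hAnte A hA)
            · exact Multiset.map_congr rfl fun A hA => hatom A (hSucc A hA)
          have h2 := hJ _ (Set.mem_insert_iff.2 (Or.inr (Set.mem_insert _ _)))
            ((C0.subst (single x t)).subst δ₂) ⟨δ₂, hsol, rfl⟩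
          rw [hclause] at h2
          exact h2
        · -- use refLeft
          have hsol : Solves δ ((Constr.conj cs).and (.conj [(Term.var x, t)])) := by
            refine ⟨hgr, ?_⟩
            intro p hp
            rcases List.mem_append.1 hp with hp | hp
            · exact hδ.2 p hp
            · simp only [List.mem_singleton] at hp
              subst hp
              simpa [Term.subst] using hinst
          exact hJ _ (Set.mem_insert _ _) _ ⟨δ, hsol, rfl⟩
    · exact hJ c (Set.mem_insert_iff.2 (Or.inr (Set.mem_insert_iff.2 (Or.inr hc)))) D hD

/-- **Model lifting through approximation.**
If `N ⇒_AP* N'` is any finite sequence of Refinement, Monadic, Shallow, and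
Linear transformation steps and the Herbrand interpretation `I` satisfies
`N'`, then the reverse monadic projection of `I` over the signature
(replacing each encoded atom `T(f_P(t⃗))` back by `P(t⃗)` for every
non-monadic predicate `P` eliminated along the sequence) is a model of `N`. -/
theorem model_lifting
    (N N' : Set (CClause S)) (ls : List (StepData S)) (I : HIntp S)
    (hch : DChain N ls N') (hI : SatSet I N') :
    SatSet (revProj ls I) N := by
  induction hch with
  | nil N => exact hI
  | cons d ls hstep hchain ih =>
    rw [revProj_cons]
    exact step_lift hstep (ih hI)

end SDCPaper
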